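/- Let $u : Q \to \mathbb{R}^d$ be measurable on the unit cube $Q = (-1/2,1/2)^d$, and let $J \subset Q$ be a countably $(d-1)$-rectifiable set with $\mathcal{H}^{d-1}(J) < \infty$. Define $T(x, \xi, t) = 1$ if $x \in Q$, $x + t\xi \in Q$, and the segment $[x, x+t\xi]$ meets $J$, and $T = 0$ otherwise. Then for every $\xi \in \mathbb{S}^{d-1}$, $\int_{\mathbb{R}^d} \int_{\mathbb{R}} T(x, \xi, t)\,dt\,dx \le 4d\,\mathcal{H}^{d-1}(J)$. -/

import Mathlib

open MeasureTheory Filter Metric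
open scoped ENNReal

/-- `J` is countably `(d-1)`-rectifiable: covered, up to an `ℋ^{d-1}`-null set, by countably
many Lipschitz images of `ℝ^{d-1}`. -/
def CountablyRectifiable (d : ℕ) (J : Set (EuclideanSpace ℝ (Fin d))) : Prop :=
  ∃ f : ℕ → EuclideanSpace ℝ (Fin (d - 1)) → EuclideanSpace ℝ (Fin d),
    (∀ n, ∃ K : NNReal, LipschitzWith K (f n)) ∧
    μH[(d : ℝ) - 1] (J \ ⋃ n, Set.range (f n)) = 0


lemma euclid_norm_le {m : ℕ} (x : EuclideanSpace ℝ (Fin m)) {c : ℝ} (hc : 0 ≤ c)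
    (h : ∀ i, |x i| ≤ c) : ‖x‖ ≤ Real.sqrt m * c := by
  rw [EuclideanSpace.norm_eq]
  have hsum : ∑ i, ‖x i‖ ^ 2 ≤ ∑ _i : Fin m, c ^ 2 := by
    refine Finset.sum_le_sum fun i _ => ?_
    have := h i
    have h0 : ‖x i‖ = |x i| := Real.norm_eq_abs _
    nlinarith [abs_nonneg (x i)]
  calc Real.sqrt (∑ i, ‖x i‖ ^ 2) ≤ Real.sqrt ((m : ℝ) * c ^ 2) := by
        apply Real.sqrt_le_sqrt; simpa using hsum
    _ = Real.sqrt m * c := by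
        rw [Real.sqrt_mul (by positivity), Real.sqrt_sq hc]

lemma coord_le_norm {m : ℕ} (x : EuclideanSpace ℝ (Fin m)) (i : Fin m) : |x i| ≤ ‖x‖ := by
  rw [EuclideanSpace.norm_eq, ← Real.sqrt_sq_eq_abs]
  apply Real.sqrt_le_sqrt
  have := Finset.single_le_sum (f := fun j => ‖x j‖ ^ 2) (fun j _ => by positivity)
    (Finset.mem_univ i)
  simpa [Real.norm_eq_abs, sq_abs] using this

noncomputable def EuclideanSpace.measurableEquiv (ι : Type*) [Fintype ι] :
    EuclideanSpace ℝ ι ≃ᵐ (ι → ℝ) :=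
  (MeasurableEquiv.toLp 2 (ι → ℝ)).symm

theorem EuclideanSpace.volume_preserving_measurableEquiv (ι : Type*) [Fintype ι] :
    MeasurePreserving (EuclideanSpace.measurableEquiv ι) :=
  EuclideanSpace.volume_preserving_symm_measurableEquiv_toLp ι

theorem EuclideanSpace.coe_measurableEquiv (ι : Type*) [Fintype ι] :
    ⇑(EuclideanSpace.measurableEquiv ι) = WithLp.ofLp := rfl

lemma volume_le_hausdorff {m : ℕ} (s : Set (EuclideanSpace ℝ (Fin m))) :
    volume s ≤ μH[(m : ℝ)] s := by
  have hle : (volume : Measure (EuclideanSpace ℝ (Fin m))) ≤ μH[(m : ℝ)] := by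
    refine Measure.le_intro fun t ht _ => ?_
    have h1 : volume t = volume ((EuclideanSpace.measurableEquiv (Fin m)).symm ⁻¹' t) :=
      (((EuclideanSpace.volume_preserving_measurableEquiv (Fin m)).symm (EuclideanSpace.measurableEquiv (Fin m))).measure_preimage
        ht.nullMeasurableSet).symm
    have h2 : (EuclideanSpace.measurableEquiv (Fin m)).symm ⁻¹' t
        = (EuclideanSpace.measurableEquiv (Fin m)) '' t := by
      rw [MeasurableEquiv.image_eq_preimage_symm]
    have h3 : volume ((EuclideanSpace.measurableEquiv (Fin m)) '' t)
        = μH[(m : ℝ)] ((EuclideanSpace.measurableEquiv (Fin m)) '' t) := by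
      have := (hausdorffMeasure_pi_real (ι := Fin m)).symm
      simp only [Fintype.card_fin] at this
      rw [this]
    have h4 : μH[(m : ℝ)] ((EuclideanSpace.measurableEquiv (Fin m)) '' t)
        ≤ μH[(m : ℝ)] t := by
      have hlip : LipschitzWith 1 (⇑(EuclideanSpace.measurableEquiv (Fin m))) := by
        rw [EuclideanSpace.coe_measurableEquiv]
        exact PiLp.lipschitzWith_ofLp 2 _
      have := hlip.hausdorffMeasure_image_le (d := (m : ℝ)) (by positivity) t
      simpa using this
    calc volume t = _ := h1
      _ = _ := by rw [h2]
      _ = _ := h3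
      _ ≤ _ := h4
  exact Measure.le_iff'.1 hle s

set_option maxHeartbeats 1000000 in
/-- Key slicing estimate: the measure of pairs `(x,t)` such that the segment from `x` to
`x + tξ` stays relevant to the unit cube and meets the rectifiable set `J` is controlled by
`4d ℋ^{d-1}(J)`. -/
theorem segment_crossing_estimate (d : ℕ) (hd : 1 ≤ d)
    (u : EuclideanSpace ℝ (Fin d) → EuclideanSpace ℝ (Fin d)) (hu : Measurable u)
    (J : Set (EuclideanSpace ℝ (Fin d))) (hJmeas : MeasurableSet J)
    (hJrect : CountablyRectifiable d J)
    (hJsub : J ⊆ {x : EuclideanSpace ℝ (Fin d) | ∀ i, x i ∈ Set.Ioo (-(1:ℝ)/2) (1/2)})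
    (hJfin : μH[(d : ℝ) - 1] J < ⊤)
    (ξ : EuclideanSpace ℝ (Fin d)) (hξ : ‖ξ‖ = 1) :
    ∫⁻ x : EuclideanSpace ℝ (Fin d),
        volume {t : ℝ |
          (∀ i, x i ∈ Set.Ioo (-(1:ℝ)/2) (1/2)) ∧
          (∀ i, (x + t • ξ) i ∈ Set.Ioo (-(1:ℝ)/2) (1/2)) ∧
          ∃ s ∈ Set.uIcc (0:ℝ) t, x + s • ξ ∈ J}
      ≤ (4 * d : ℝ≥0∞) * μH[(d : ℝ) - 1] J := by
  obtain ⟨n, rfl⟩ : ∃ n, d = n + 1 := ⟨d - 1, (Nat.succ_pred_eq_of_pos hd).symm⟩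
  have hexp : ((n + 1 : ℕ) : ℝ) - 1 = (n : ℝ) := by push_cast; ring
  rw [hexp] at hJfin ⊢
  set r : ℝ := Real.sqrt (n + 1) with hr
  have hr0 : 0 < r := Real.sqrt_pos.2 (by positivity)
  -- the unit vector along the first coordinate
  set ξ' : EuclideanSpace ℝ (Fin (n+1)) := EuclideanSpace.single (0 : Fin (n + 1)) (1 : ℝ) with hξ'
  have hξ'n : ‖ξ'‖ = 1 := by rw [hξ', EuclideanSpace.norm_single]; norm_num
  -- rotation sending ξ' to ξ
  set f : EuclideanSpace ℝ (Fin (n+1)) ≃ₗᵢ[ℝ] EuclideanSpace ℝ (Fin (n+1)) := Submodule.reflection (ℝ ∙ (ξ' - ξ))ᗮ with hf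
  have hfξ' : f ξ' = ξ := Submodule.reflection_sub (by rw [hξ'n, hξ])
  have hfsymm : f.symm ξ = ξ' := by rw [← hfξ']; exact f.symm_apply_apply ξ'
  -- the 1-Lipschitz coordinate projection
  set g : EuclideanSpace ℝ (Fin (n+1)) → EuclideanSpace ℝ (Fin n) := fun x => WithLp.toLp 2 (fun i : Fin n => x i.succ) with hg
  have hglip : LipschitzWith 1 g := by
    refine LipschitzWith.of_dist_le_mul fun x y => ?_
    simp only [NNReal.coe_one, one_mul]
    rw [EuclideanSpace.dist_eq, EuclideanSpace.dist_eq]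
    apply Real.sqrt_le_sqrt
    calc ∑ i : Fin n, dist (g x i) (g y i) ^ 2
        = ∑ i : Fin n, dist (x i.succ) (y i.succ) ^ 2 := rfl
      _ ≤ ∑ i : Fin (n + 1), dist (x i) (y i) ^ 2 := by
          rw [Fin.sum_univ_succ (f := fun i => dist (x i) (y i) ^ 2)]
          exact le_add_of_nonneg_left (by positivity)
  have hgcont : Continuous g := hglip.continuous
  -- the projected set and its measurable hull
  set P : Set (EuclideanSpace ℝ (Fin n)) := g '' (f ⁻¹' J) with hP
  set Pm : Set (EuclideanSpace ℝ (Fin n)) := toMeasurable volume P with hPm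
  have hPmmeas : MeasurableSet Pm := measurableSet_toMeasurable _ _
  have hPsub : P ⊆ Pm := subset_toMeasurable _ _
  -- bound the measure of Pm by the Hausdorff measure of J
  have hPmJ : volume Pm ≤ μH[(n : ℝ)] J := by
    have h1 : volume Pm = volume P := measure_toMeasurable _
    have h2 : volume P ≤ μH[(n : ℝ)] P := volume_le_hausdorff _
    have h3 : μH[(n : ℝ)] P ≤ μH[(n : ℝ)] (f ⁻¹' J) := by
      have := hglip.hausdorffMeasure_image_le (d := (n : ℝ)) (by positivity) (f ⁻¹' J)
      simpa using this
    have h4 : μH[(n : ℝ)] (f ⁻¹' J) = μH[(n : ℝ)] J := by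
      have := f.isometry.hausdorffMeasure_preimage (d := (n : ℝ)) (Or.inr f.surjective) J
      simpa [f.surjective.range_eq] using this
    rw [h1, ← h4]; exact h2.trans h3
  -- the controlling measurable set
  set S : Set (EuclideanSpace ℝ (Fin (n+1))) :=
    {x | ‖x‖ ≤ r / 2 ∧ g (f.symm x) ∈ Pm} with hS
  have hSmeas : MeasurableSet S := by
    rw [hS, Set.setOf_and]
    exact (measurableSet_le measurable_norm measurable_const).inter
      ((hgcont.comp f.symm.continuous).measurable hPmmeas)
  -- pointwise bound on the sections
  have hpoint : ∀ x : EuclideanSpace ℝ (Fin (n+1)),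
      volume {t : ℝ |
          (∀ i, x i ∈ Set.Ioo (-(1:ℝ)/2) (1/2)) ∧
          (∀ i, (x + t • ξ) i ∈ Set.Ioo (-(1:ℝ)/2) (1/2)) ∧
          ∃ s ∈ Set.uIcc (0:ℝ) t, x + s • ξ ∈ J}
        ≤ S.indicator (fun _ => ENNReal.ofReal (2 * r)) x := by
    intro x
    by_cases hx : x ∈ S
    · rw [Set.indicator_of_mem hx]
      refine le_trans (measure_mono (t := Set.Icc (-r) r) ?_) ?_
      · -- the section is contained in Icc (-r) r
        intro t ht
        obtain ⟨h1, h2, -⟩ := ht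
        have hcoord : ∀ i, |(t • ξ) i| ≤ 1 := by
          intro i
          have e1 := h1 i
          have e2 := h2 i
          have : (x + t • ξ) i = x i + (t • ξ) i := rfl
          rw [this] at e2
          simp only [Set.mem_Ioo] at e1 e2
          rw [abs_le]; constructor <;> nlinarith [e1.1, e1.2, e2.1, e2.2]
        have hn : ‖t • ξ‖ ≤ r := by
          have := euclid_norm_le (t • ξ) (by norm_num) hcoord
          simpa [hr] using this
        rw [norm_smul, hξ, mul_one, Real.norm_eq_abs] at hn
        exact Set.mem_Icc.2 (abs_le.1 hn)
      · rw [Real.volume_Icc]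
        apply ENNReal.ofReal_le_ofReal; linarith
    · -- the section is empty
      rw [Set.indicator_of_notMem hx]
      have hempty : {t : ℝ |
          (∀ i, x i ∈ Set.Ioo (-(1:ℝ)/2) (1/2)) ∧
          (∀ i, (x + t • ξ) i ∈ Set.Ioo (-(1:ℝ)/2) (1/2)) ∧
          ∃ s ∈ Set.uIcc (0:ℝ) t, x + s • ξ ∈ J} = ∅ := by
        ext t
        simp only [Set.mem_setOf_eq, Set.mem_empty_iff_false, iff_false, not_and]
        intro h1 _
        rintro ⟨s, -, hsJ⟩
        apply hx
        constructor
        · have hb : ∀ i, |x i| ≤ 1/2 := by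
            intro i
            have := h1 i
            simp only [Set.mem_Ioo] at this
            rw [abs_le]; constructor <;> linarith [this.1, this.2]
          have := euclid_norm_le x (by norm_num) hb
          calc ‖x‖ ≤ Real.sqrt (n + 1) * (1/2) := by simpa using this
            _ = r / 2 := by rw [hr]; ring
        · refine hPsub ⟨f.symm x + s • ξ', ?_, ?_⟩
          · show f (f.symm x + s • ξ') ∈ J
            rw [map_add, f.apply_symm_apply, LinearIsometryEquiv.map_smul, hfξ']
            exact hsJ
          · show g (f.symm x + s • ξ') = g (f.symm x)
            ext i
            show (f.symm x + s • ξ') i.succ = (f.symm x) i.succ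
            have : ξ' i.succ = 0 := by
              rw [hξ', EuclideanSpace.single_apply]
              simp [Fin.succ_ne_zero]
            simp [PiLp.add_apply, PiLp.smul_apply, this]
      rw [hempty]
      simp
  -- compute the volume of S
  have hSvol : volume S ≤ ENNReal.ofReal r * volume Pm := by
    have hpre : volume S = volume (f ⁻¹' S) :=
      (f.measurePreserving.measure_preimage hSmeas.nullMeasurableSet).symm
    set S1 : Set (EuclideanSpace ℝ (Fin (n+1))) := {x | |x 0| ≤ r / 2 ∧ g x ∈ Pm} with hS1def
    have hsub : f ⁻¹' S ⊆ S1 := by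
      rintro x ⟨hx1, hx2⟩
      refine ⟨le_trans (coord_le_norm x 0) ?_, ?_⟩
      · rwa [f.norm_map] at hx1
      · rwa [f.symm_apply_apply] at hx2
    set C : Set (Fin n → ℝ) := (EuclideanSpace.measurableEquiv (Fin n)).symm ⁻¹' Pm with hCdef
    have hC : MeasurableSet C := (MeasurableEquiv.measurable _) hPmmeas
    have hseteq : S1 = (EuclideanSpace.measurableEquiv (Fin (n+1))) ⁻¹'
        ((MeasurableEquiv.piFinSuccAbove (fun _ : Fin (n+1) => ℝ) 0) ⁻¹'
          (Set.Icc (-(r/2)) (r/2) ×ˢ C)) := by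
      ext x
      have key : (EuclideanSpace.measurableEquiv (Fin n)).symm
          (Fin.removeNth 0 ((EuclideanSpace.measurableEquiv (Fin (n+1))) x)) = g x := by
        ext i
        show Fin.removeNth 0 ((EuclideanSpace.measurableEquiv (Fin (n+1))) x) i = x i.succ
        rw [Fin.removeNth]
        simp [Fin.zero_succAbove, EuclideanSpace.coe_measurableEquiv]
      simp only [hS1def, Set.mem_setOf_eq, Set.mem_preimage,
        MeasurableEquiv.piFinSuccAbove_apply, Fin.insertNthEquiv_symm_apply,
        Set.mem_prod, Set.mem_Icc, hCdef]
      rw [key]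
      constructor
      · rintro ⟨ha, hb⟩
        refine ⟨?_, hb⟩
        have : ((EuclideanSpace.measurableEquiv (Fin (n+1))) x) 0 = x 0 := by
          simp [EuclideanSpace.coe_measurableEquiv]
        rw [this]
        exact abs_le.1 ha
      · rintro ⟨ha, hb⟩
        refine ⟨?_, hb⟩
        have : ((EuclideanSpace.measurableEquiv (Fin (n+1))) x) 0 = x 0 := by
          simp [EuclideanSpace.coe_measurableEquiv]
        rw [this] at ha
        exact abs_le.2 ha
    have hS1vol : volume S1 = ENNReal.ofReal r * volume Pm := by
      rw [hseteq]
      have hA : MeasurableSet (Set.Icc (-(r/2)) (r/2) ×ˢ C) := measurableSet_Icc.prod hC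
      rw [(EuclideanSpace.volume_preserving_measurableEquiv (Fin (n+1))).measure_preimage
        (((MeasurableEquiv.piFinSuccAbove (fun _ : Fin (n+1) => ℝ) 0).measurable
          hA).nullMeasurableSet)]
      rw [(volume_preserving_piFinSuccAbove (fun _ : Fin (n+1) => ℝ) 0).measure_preimage
        hA.nullMeasurableSet]
      rw [Measure.volume_eq_prod, Measure.prod_prod, Real.volume_Icc]
      have h1 : r / 2 - -(r/2) = r := by ring
      rw [h1]
      congr 1
      exact ((EuclideanSpace.volume_preserving_measurableEquiv (Fin n)).symm
        (EuclideanSpace.measurableEquiv (Fin n))).measure_preimage hPmmeas.nullMeasurableSet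
    calc volume S = volume (f ⁻¹' S) := hpre
      _ ≤ volume S1 := measure_mono hsub
      _ = ENNReal.ofReal r * volume Pm := hS1vol
  -- put everything together
  calc ∫⁻ x : EuclideanSpace ℝ (Fin (n+1)),
        volume {t : ℝ |
          (∀ i, x i ∈ Set.Ioo (-(1:ℝ)/2) (1/2)) ∧
          (∀ i, (x + t • ξ) i ∈ Set.Ioo (-(1:ℝ)/2) (1/2)) ∧
          ∃ s ∈ Set.uIcc (0:ℝ) t, x + s • ξ ∈ J}
      ≤ ∫⁻ x, S.indicator (fun _ => ENNReal.ofReal (2 * r)) x := lintegral_mono hpoint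
    _ = ENNReal.ofReal (2 * r) * volume S := lintegral_indicator_const hSmeas _
    _ ≤ ENNReal.ofReal (2 * r) * (ENNReal.ofReal r * volume Pm) := by gcongr
    _ ≤ ENNReal.ofReal (2 * r) * (ENNReal.ofReal r * μH[(n:ℝ)] J) := by gcongr
    _ = ENNReal.ofReal (2 * r * r) * μH[(n:ℝ)] J := by
        rw [← mul_assoc, ← ENNReal.ofReal_mul (by positivity : (0:ℝ) ≤ 2 * r)]
    _ ≤ (4 * (((n:ℕ) + 1 : ℕ) : ℝ≥0∞)) * μH[(n:ℝ)] J := by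
        apply mul_le_mul_left
        have h2 : 2 * r * r = 2 * ((n:ℝ) + 1) := by
          rw [hr]
          have := Real.mul_self_sqrt (show (0:ℝ) ≤ (n:ℝ) + 1 by positivity)
          nlinarith [this]
        rw [h2]
        have h3 : ENNReal.ofReal (2 * ((n:ℝ) + 1)) = ((2 * (n + 1) : ℕ) : ℝ≥0∞) := by
          rw [← ENNReal.ofReal_natCast]
          congr 1
          push_cast; ring
        rw [h3]
        have h4 : ((2 * (n + 1) : ℕ) : ℝ≥0∞) ≤ ((4 * (n + 1) : ℕ) : ℝ≥0∞) :=
          Nat.cast_le.2 (by omega)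
        rw [show ((4 * (n + 1) : ℕ) : ℝ≥0∞) = 4 * (((n:ℕ) + 1 : ℕ) : ℝ≥0∞) by
          push_cast; ring] at h4
        exact h4
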